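/- Let C ⊆ L0+ be convex, max-closed and bounded. Then C^max ≠ ∅, i.e. C possesses at least one maximal element. -/

import Mathlib

open MeasureTheory Filter Set

noncomputable section

variable {Ω : Type*} [MeasurableSpace Ω]

/-- The nonnegative orthant `L⁰₊` of the space `L⁰` of (a.e.-equivalence classes of)
random variables over `(Ω, ℱ, P)`. -/
def L0plus (P : Measure Ω) : Set (Ω →ₘ[P] ℝ) := {f | 0 ≤ f}

/-- The metric `(f, g) ↦ E[1 ∧ |f - g|]` inducing the topology of convergence
in probability on `L⁰`. -/
def dist0 (P : Measure Ω) (f g : Ω →ₘ[P] ℝ) : ℝ :=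
  ∫ ω, min 1 |f ω - g ω| ∂P

/-- Convergence in probability of a sequence in `L⁰`. -/
def Tendsto0 (P : Measure Ω) (f : ℕ → Ω →ₘ[P] ℝ) (g : Ω →ₘ[P] ℝ) : Prop :=
  Tendsto (fun n => dist0 P (f n) g) atTop (nhds 0)

/-- Closure of a set in `L⁰` with respect to the topology of convergence in probability. -/
def closure0 (P : Measure Ω) (C : Set (Ω →ₘ[P] ℝ)) : Set (Ω →ₘ[P] ℝ) :=
  {f | ∀ ε : ℝ, 0 < ε → ∃ g ∈ C, dist0 P f g < ε}

/-- A set of `L⁰` is closed iff it contains its closure. -/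
def IsClosed0 (P : Measure Ω) (C : Set (Ω →ₘ[P] ℝ)) : Prop :=
  closure0 P C ⊆ C

/-- Boundedness (in probability) of a set `C ⊆ L⁰₊` : `lim_{ℓ → ∞} sup_{f ∈ C} P[f > ℓ] = 0`. -/
def Bounded0 (P : Measure Ω) (C : Set (Ω →ₘ[P] ℝ)) : Prop :=
  Tendsto (fun ℓ : ℝ => ⨆ f ∈ C, P {ω | ℓ < f ω}) atTop (nhds 0)

/-- The set `C^max` of maximal elements of `C ⊆ L⁰₊` : `f ∈ C` such that `f ≤ g` a.s.
and `g ∈ C` imply `f = g` a.s. -/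
def maxSet (P : Measure Ω) (C : Set (Ω →ₘ[P] ℝ)) : Set (Ω →ₘ[P] ℝ) :=
  {f | f ∈ C ∧ ∀ g ∈ C, f ≤ g → f = g}

/-- `C` is max-closed if every maximal element of its closure already belongs to `C`. -/
def MaxClosed (P : Measure Ω) (C : Set (Ω →ₘ[P] ℝ)) : Prop :=
  maxSet P (closure0 P C) ⊆ C

/-- The pairing `⟨μ, f⟩ = ∫ f dμ ∈ [0, ∞]` between a nonnegative measure `μ` and `f ∈ L⁰₊`. -/
def pairing {P : Measure Ω} (μ : Measure Ω) (f : Ω →ₘ[P] ℝ) : ENNReal :=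
  ∫⁻ ω, ENNReal.ofReal (f ω) ∂μ

/-- The set `C^osp` of outer support points of `C ⊆ L⁰₊`: points `g ∈ C^max` for which there
is a σ-finite nonnegative measure `μ ≪ P` with `0 < sup_{f ∈ C} ⟨μ, f⟩ = ⟨μ, g⟩ < ∞`;
by convention `{0}^osp = {0}`. -/
def osp (P : Measure Ω) (C : Set (Ω →ₘ[P] ℝ)) : Set (Ω →ₘ[P] ℝ) :=
  {g | g ∈ maxSet P C ∧
    (C = {0} ∨ ∃ μ : Measure Ω, μ ≪ P ∧ SigmaFinite μ ∧
      0 < pairing μ g ∧ pairing μ g < ⊤ ∧ (⨆ f ∈ C, pairing μ f) = pairing μ g)}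

/-- The solid hull of `C ⊆ L⁰₊`. -/
def solidHull (P : Measure Ω) (C : Set (Ω →ₘ[P] ℝ)) : Set (Ω →ₘ[P] ℝ) :=
  {f | f ∈ L0plus P ∧ ∃ g ∈ C, f ≤ g}

/-- A set `S ⊆ L⁰₊` is solid if `g ∈ S` and `0 ≤ f ≤ g` imply `f ∈ S`. -/
def Solid (P : Measure Ω) (S : Set (Ω →ₘ[P] ℝ)) : Prop :=
  ∀ g ∈ S, ∀ f : Ω →ₘ[P] ℝ, 0 ≤ f → f ≤ g → f ∈ S

/-- `(g n)` is a sequence of forward convex combinations of `(f n)`. -/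
def ForwardConvexComb (P : Measure Ω) (f g : ℕ → Ω →ₘ[P] ℝ) : Prop :=
  ∀ n : ℕ, g n ∈ convexHull ℝ (f '' Set.Ici n)

end

set_option linter.unusedSectionVars false
section AuxLemmas

open Real

variable {Ω : Type*} [MeasurableSpace Ω] {P : Measure Ω} [IsProbabilityMeasure P]

lemma min1_nonneg (x : ℝ) : 0 ≤ min 1 |x| := le_min one_pos.le (abs_nonneg x)

lemma min1_le_one (x : ℝ) : min 1 |x| ≤ 1 := min_le_left _ _

lemma min1_triangle (a b c : ℝ) : min 1 |a - c| ≤ min 1 |a - b| + min 1 |b - c| := by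
  rcases le_or_gt 1 |a - b| with h | h
  · have h1 : min 1 |a - b| = 1 := min_eq_left h
    have := min1_le_one (a - c)
    have := min1_nonneg (b - c)
    linarith
  rcases le_or_gt 1 |b - c| with h' | h'
  · have h1 : min 1 |b - c| = 1 := min_eq_left h'
    have := min1_le_one (a - c)
    have := min1_nonneg (a - b)
    linarith
  · have h1 : min 1 |a - b| = |a - b| := min_eq_right h.le
    have h2 : min 1 |b - c| = |b - c| := min_eq_right h'.le
    have h3 : min 1 |a - c| ≤ |a - c| := min_le_right _ _
    have h4 : |a - c| ≤ |a - b| + |b - c| := abs_sub_le a b c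
    linarith

lemma integrable_min1 (f g : Ω →ₘ[P] ℝ) :
    Integrable (fun ω => min 1 |f ω - g ω|) P := by
  apply (integrable_const (1 : ℝ)).mono'
  · exact (measurable_const.min ((f.measurable.sub g.measurable).abs)).aestronglyMeasurable
  · refine Eventually.of_forall fun ω => ?_
    rw [Real.norm_eq_abs, abs_of_nonneg (min1_nonneg _)]
    exact min1_le_one _

lemma dist0_self (f : Ω →ₘ[P] ℝ) : dist0 P f f = 0 := by
  simp [dist0]

lemma dist0_triangle (f g h : Ω →ₘ[P] ℝ) :
    dist0 P f h ≤ dist0 P f g + dist0 P g h := by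
  rw [dist0, dist0, dist0, ← integral_add (integrable_min1 f g) (integrable_min1 g h)]
  exact integral_mono (integrable_min1 f h)
    ((integrable_min1 f g).add (integrable_min1 g h)) fun ω => min1_triangle _ _ _

lemma markov0 (f g : Ω →ₘ[P] ℝ) :
    P {ω | 1 ≤ |f ω - g ω|} ≤ ENNReal.ofReal (dist0 P f g) := by
  have hmeas : Measurable fun ω => min 1 |f ω - g ω| :=
    measurable_const.min ((f.measurable.sub g.measurable).abs)
  rw [dist0, ofReal_integral_eq_lintegral_ofReal (integrable_min1 f g)
    (Eventually.of_forall fun ω => min1_nonneg _)]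
  have hset : {ω | 1 ≤ |f ω - g ω|} = {ω | 1 ≤ ENNReal.ofReal (min 1 |f ω - g ω|)} := by
    ext ω; simp [ENNReal.one_le_ofReal, le_min_iff]
  calc P {ω | 1 ≤ |f ω - g ω|}
      = 1 * P {ω | 1 ≤ ENNReal.ofReal (min 1 |f ω - g ω|)} := by rw [one_mul, hset]
    _ ≤ ∫⁻ ω, ENNReal.ofReal (min 1 |f ω - g ω|) ∂P :=
        mul_meas_ge_le_lintegral₀ hmeas.ennreal_ofReal.aemeasurable 1

/-- The strictly monotone bounded functional `f ↦ ∫ arctan f dP`. -/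
noncomputable def phi (P : Measure Ω) (f : Ω →ₘ[P] ℝ) : ℝ := ∫ ω, Real.arctan (f ω) ∂P

lemma integrable_arctan (f : Ω →ₘ[P] ℝ) :
    Integrable (fun ω => Real.arctan (f ω)) P := by
  apply (integrable_const (π / 2)).mono'
  · exact (Real.continuous_arctan.measurable.comp f.measurable).aestronglyMeasurable
  · refine Eventually.of_forall fun ω => ?_
    rw [Real.norm_eq_abs]
    exact (abs_lt.2 ⟨neg_pi_div_two_lt_arctan _, arctan_lt_pi_div_two _⟩).le

lemma phi_mono {f g : Ω →ₘ[P] ℝ} (h : f ≤ g) : phi P f ≤ phi P g := by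
  refine integral_mono_ae (integrable_arctan f) (integrable_arctan g) ?_
  exact (AEEqFun.coeFn_le.2 h).mono fun ω hω => arctan_strictMono.monotone hω

lemma phi_le (f : Ω →ₘ[P] ℝ) : phi P f ≤ π / 2 := by
  have : phi P f ≤ ∫ _ω, π / 2 ∂P :=
    integral_mono (integrable_arctan f) (integrable_const _)
      fun ω => (arctan_lt_pi_div_two _).le
  simpa [integral_const] using this

lemma phi_strict {f g : Ω →ₘ[P] ℝ} (h : f ≤ g) (he : phi P f = phi P g) : f = g := by
  have hle : (f : Ω → ℝ) ≤ᵐ[P] g := AEEqFun.coeFn_le.2 h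
  have hint : Integrable (fun ω => Real.arctan (g ω) - Real.arctan (f ω)) P :=
    (integrable_arctan g).sub (integrable_arctan f)
  have h0 : ∫ ω, (Real.arctan (g ω) - Real.arctan (f ω)) ∂P = 0 := by
    rw [integral_sub (integrable_arctan g) (integrable_arctan f)]
    have : phi P g - phi P f = 0 := by rw [he]; ring
    simpa [phi] using this
  have hnn : 0 ≤ᵐ[P] fun ω => Real.arctan (g ω) - Real.arctan (f ω) := by
    filter_upwards [hle] with ω hω
    exact sub_nonneg.2 (arctan_strictMono.monotone hω)
  rw [integral_eq_zero_iff_of_nonneg_ae hnn hint] at h0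
  apply AEEqFun.ext
  filter_upwards [h0] with ω hω
  have : Real.arctan (g ω) - Real.arctan (f ω) = 0 := hω
  exact arctan_injective (by linarith)

end AuxLemmas

open Real in
set_option maxHeartbeats 1000000 in
/-- A nonempty convex, max-closed and bounded set `C ⊆ L⁰₊` possesses at
least one maximal element: `C^max ≠ ∅`. -/
theorem statement4 {Ω : Type*} [MeasurableSpace Ω] (P : Measure Ω) [IsProbabilityMeasure P]
    (C : Set (Ω →ₘ[P] ℝ)) (hCL0 : C ⊆ L0plus P) (hCne : C.Nonempty)
    (hconv : Convex ℝ C) (hmaxcl : MaxClosed P C) (hbdd : Bounded0 P C) :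
    (maxSet P C).Nonempty := by
  classical
  set S := closure0 P C with hSdef
  have hCS : C ⊆ S := by
    intro f hf ε hε
    exact ⟨f, hf, by rw [dist0_self]; exact hε⟩
  -- the closure is bounded in probability as well
  set B : ℝ → ENNReal := fun ℓ => ⨆ g ∈ C, P {ω | ℓ - 1 < g ω} with hBdef
  have hBtend : Tendsto B atTop (nhds 0) := by
    have := hbdd.comp (tendsto_atTop_add_const_right atTop (-1) tendsto_id)
    simpa [hBdef, sub_eq_add_neg, Function.comp_def] using this
  have hSB : ∀ f ∈ S, ∀ ℓ : ℝ, P {ω | ℓ < f ω} ≤ B ℓ := by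
    intro f hf ℓ
    apply ENNReal.le_of_forall_pos_le_add
    intro ε hε _
    obtain ⟨g, hgC, hdist⟩ := hf (ε : ℝ) (by exact_mod_cast hε)
    have hsub : {ω | ℓ < f ω} ⊆ {ω | ℓ - 1 < g ω} ∪ {ω | 1 ≤ |f ω - g ω|} := by
      intro ω hω
      by_cases h : ℓ - 1 < g ω
      · exact Or.inl h
      · push_neg at h
        have hωlt : ℓ < f ω := hω
        have : 1 ≤ f ω - g ω := by linarith
        exact Or.inr (this.trans (le_abs_self _))
    calc P {ω | ℓ < f ω} ≤ P {ω | ℓ - 1 < g ω} + P {ω | 1 ≤ |f ω - g ω|} :=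
          (measure_mono hsub).trans (measure_union_le _ _)
      _ ≤ B ℓ + (ε : ENNReal) := by
          refine add_le_add (le_biSup (fun g : Ω →ₘ[P] ℝ => P {ω | ℓ - 1 < g ω}) hgC) ((markov0 f g).trans ?_)
          calc ENNReal.ofReal (dist0 P f g) ≤ ENNReal.ofReal (ε : ℝ) :=
                ENNReal.ofReal_le_ofReal hdist.le
            _ = (ε : ENNReal) := ENNReal.ofReal_coe_nnreal
  have hSb : ∀ ε : ENNReal, 0 < ε → ∃ ℓ : ℝ, ∀ f ∈ S, P {ω | ℓ < f ω} ≤ ε := by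
    intro ε hε
    obtain ⟨ℓ₀, hℓ₀⟩ := eventually_atTop.1 ((ENNReal.tendsto_nhds_zero.1 hBtend) ε hε)
    exact ⟨ℓ₀, fun f hf => (hSB f hf ℓ₀).trans (hℓ₀ ℓ₀ le_rfl)⟩
  have key : ∀ K ⊆ S, IsChain (· ≤ ·) K → ∀ y ∈ K, ∃ ub ∈ S, ∀ z ∈ K, z ≤ ub := by
    intro K hKS hK y hy
    set s : ℝ := sSup (phi P '' K) with hsdef
    have hKimne : (phi P '' K).Nonempty := ⟨_, mem_image_of_mem _ hy⟩
    have hKbdd : BddAbove (phi P '' K) := ⟨π / 2, by rintro _ ⟨k, _, rfl⟩; exact phi_le _⟩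
    have hgn : ∀ n : ℕ, ∃ x ∈ K, s - 1 / ((n : ℝ) + 1) < phi P x := by
      intro n
      have h1 : s - 1 / ((n : ℝ) + 1) < s := sub_lt_self s (by positivity)
      obtain ⟨_, ⟨x, hx, rfl⟩, hlt⟩ := exists_lt_of_lt_csSup hKimne h1
      exact ⟨x, hx, hlt⟩
    choose g hgK hgφ using hgn
    -- running maximum along the chain
    set F0 : ℕ → (Ω →ₘ[P] ℝ) :=
      fun n => Nat.rec (g 0) (fun k fk => if fk ≤ g (k + 1) then g (k + 1) else fk) n with hF0def
    have hF0succ : ∀ n, F0 (n + 1) = if F0 n ≤ g (n + 1) then g (n + 1) else F0 n := fun n => rfl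
    have hFK : ∀ n, F0 n ∈ K := by
      intro n
      induction n with
      | zero => exact hgK 0
      | succ k ih => rw [hF0succ]; split_ifs; exacts [hgK _, ih]
    have hFmono : Monotone F0 := by
      apply monotone_nat_of_le_succ
      intro n
      rw [hF0succ]
      split_ifs with h
      exacts [h, le_rfl]
    have hFge : ∀ n, phi P (g n) ≤ phi P (F0 n) := by
      intro n
      cases n with
      | zero => exact le_rfl
      | succ k =>
        rw [hF0succ]
        split_ifs with h
        · exact le_rfl
        · refine phi_mono ?_
          rcases eq_or_ne (g (k + 1)) (F0 k) with he | hne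
          · exact he.le
          · rcases hK (hgK (k + 1)) (hFK k) hne with h1 | h1
            · exact h1
            · exact absurd h1 h
    have hFphi : ∀ n : ℕ, s - 1 / ((n : ℝ) + 1) < phi P (F0 n) :=
      fun n => lt_of_lt_of_le (hgφ n) (hFge n)
    -- a.e. pointwise monotonicity
    set t : Set Ω := {ω | ∀ n, (F0 n : Ω → ℝ) ω ≤ F0 (n + 1) ω} with htdef
    have htae : ∀ᵐ ω ∂P, ω ∈ t :=
      ae_all_iff.2 fun n => AEEqFun.coeFn_le.2 (hFmono (Nat.le_succ n))
    -- a.e. boundedness above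
    set Abad : Set Ω := {ω | ¬ BddAbove (range fun n => (F0 n : Ω → ℝ) ω)} with hAdef
    have hAbad : P (Abad ∩ t) = 0 := by
      refine le_antisymm ?_ (zero_le)
      refine ENNReal.le_of_forall_pos_le_add fun ε hε _ => ?_
      rw [zero_add]
      obtain ⟨ℓ, hℓ⟩ := hSb ε (by exact_mod_cast hε)
      have hmono : Monotone fun n => ({ω | ℓ < (F0 n : Ω → ℝ) ω} ∩ t) := by
        intro n m hnm ω hω
        obtain ⟨h1, h2⟩ := hω
        have hmo : Monotone fun k => (F0 k : Ω → ℝ) ω := monotone_nat_of_le_succ h2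
        exact ⟨lt_of_lt_of_le h1 (hmo hnm), h2⟩
      have hsub : Abad ∩ t ⊆ ⋃ n, ({ω | ℓ < (F0 n : Ω → ℝ) ω} ∩ t) := by
        rintro ω ⟨hA, htω⟩
        by_contra hcon
        simp only [mem_iUnion, mem_inter_iff, mem_setOf_eq, not_exists, not_and] at hcon
        refine hA ⟨ℓ, ?_⟩
        rintro _ ⟨n, rfl⟩
        by_contra hl
        push_neg at hl
        exact hcon n hl htω
      calc P (Abad ∩ t) ≤ P (⋃ n, ({ω | ℓ < (F0 n : Ω → ℝ) ω} ∩ t)) := measure_mono hsub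
        _ = ⨆ n, P ({ω | ℓ < (F0 n : Ω → ℝ) ω} ∩ t) := hmono.measure_iUnion
        _ ≤ ε := iSup_le fun n =>
            (measure_mono inter_subset_left).trans (hℓ _ (hKS (hFK n)))
    -- the limit candidate
    set G : Ω → ℝ := fun ω => ⨆ n, arctan ((F0 n : Ω → ℝ) ω) with hGdef
    have hGmeas : Measurable G :=
      Measurable.iSup fun n => Real.continuous_arctan.measurable.comp (F0 n).measurable
    have htanmeas : Measurable Real.tan := by
      have : Real.tan = fun x => Real.sin x / Real.cos x := funext Real.tan_eq_sin_div_cos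
      rw [this]
      exact Real.measurable_sin.div Real.measurable_cos
    set Flim : Ω → ℝ := fun ω => Real.tan (G ω) with hFlimdef
    have hFlimmeas : Measurable Flim := htanmeas.comp hGmeas
    set fstar : Ω →ₘ[P] ℝ := AEEqFun.mk Flim hFlimmeas.aestronglyMeasurable with hfstardef
    have hfstar_coe : (fstar : Ω → ℝ) =ᵐ[P] Flim := AEEqFun.coeFn_mk _ _
    have hgood : ∀ᵐ ω ∂P, ω ∈ t ∧ ω ∉ Abad := by
      have h1 : ∀ᵐ ω ∂P, ω ∉ Abad ∩ t := measure_eq_zero_iff_ae_notMem.1 hAbad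
      filter_upwards [htae, h1] with ω h2 h3
      exact ⟨h2, fun hA => h3 ⟨hA, h2⟩⟩
    have hptwise : ∀ᵐ ω ∂P, (∀ n, (F0 n : Ω → ℝ) ω ≤ Flim ω) ∧
        Tendsto (fun n => (F0 n : Ω → ℝ) ω) atTop (nhds (Flim ω)) := by
      filter_upwards [hgood] with ω hω
      obtain ⟨ht1, ht2⟩ := hω
      have hmono : Monotone fun n => (F0 n : Ω → ℝ) ω := monotone_nat_of_le_succ ht1
      have hbddω : BddAbove (range fun n => (F0 n : Ω → ℝ) ω) := not_not.1 ht2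
      have harcbdd : BddAbove (range fun n => arctan ((F0 n : Ω → ℝ) ω)) :=
        ⟨π / 2, by rintro _ ⟨m, rfl⟩; exact (arctan_lt_pi_div_two _).le⟩
      have hGa : ∀ n, arctan ((F0 n : Ω → ℝ) ω) ≤ G ω := fun n => le_ciSup harcbdd n
      have hGlt : G ω < π / 2 := by
        obtain ⟨M, hM⟩ := hbddω
        have h1 : G ω ≤ arctan M :=
          ciSup_le fun n => arctan_strictMono.monotone (hM (mem_range_self n))
        exact lt_of_le_of_lt h1 (arctan_lt_pi_div_two M)
      have hGgt : -(π / 2) < G ω :=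
        lt_of_lt_of_le (neg_pi_div_two_lt_arctan ((F0 0 : Ω → ℝ) ω)) (hGa 0)
      have hGmem : G ω ∈ Ioo (-(π / 2)) (π / 2) := ⟨hGgt, hGlt⟩
      constructor
      · intro n
        have h2 := strictMonoOn_tan.monotoneOn (arctan_mem_Ioo _) hGmem (hGa n)
        rwa [tan_arctan] at h2
      · have htend : Tendsto (fun n => arctan ((F0 n : Ω → ℝ) ω)) atTop (nhds (G ω)) :=
          tendsto_atTop_ciSup (fun a b hab => arctan_strictMono.monotone (hmono hab)) harcbdd
        have hcont : ContinuousAt Real.tan (G ω) :=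
          Real.continuousAt_tan.2 (cos_pos_of_mem_Ioo hGmem).ne'
        have h3 := hcont.tendsto.comp htend
        simp only [Function.comp_def, tan_arctan] at h3
        exact h3
    have hdist_tend : Tendsto (fun n => dist0 P fstar (F0 n)) atTop (nhds 0) := by
      have heq : ∀ n, dist0 P fstar (F0 n) = ∫ ω, min 1 |Flim ω - (F0 n : Ω → ℝ) ω| ∂P := by
        intro n
        apply integral_congr_ae
        filter_upwards [hfstar_coe] with ω hω
        rw [hω]
      simp only [heq]
      have hDCT := tendsto_integral_of_dominated_convergence (μ := P)
        (F := fun n ω => min 1 |Flim ω - (F0 n : Ω → ℝ) ω|) (f := fun _ => (0 : ℝ))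
        (fun _ω => (1 : ℝ))
        (fun n => (measurable_const.min
          ((hFlimmeas.sub (F0 n).measurable).abs)).aestronglyMeasurable)
        (integrable_const 1)
        (fun n => Eventually.of_forall fun ω => by
          rw [Real.norm_eq_abs, abs_of_nonneg (min1_nonneg _)]; exact min1_le_one _)
        ?_
      · simpa using hDCT
      · filter_upwards [hptwise] with ω hω
        have h1 : Tendsto (fun n => min 1 |Flim ω - (F0 n : Ω → ℝ) ω|) atTop
            (nhds (min 1 |Flim ω - Flim ω|)) :=
          tendsto_const_nhds.min (tendsto_const_nhds.sub hω.2).abs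
        simpa using h1
    have hfstarS : fstar ∈ S := by
      intro ε hε
      obtain ⟨n, hn⟩ := (hdist_tend.eventually (gt_mem_nhds (half_pos hε))).exists
      obtain ⟨g', hg'C, hg'⟩ := hKS (hFK n) (ε / 2) (half_pos hε)
      exact ⟨g', hg'C, lt_of_le_of_lt (dist0_triangle fstar (F0 n) g') (by linarith)⟩
    have hFle : ∀ n, F0 n ≤ fstar := by
      intro n
      rw [← AEEqFun.coeFn_le]
      filter_upwards [hptwise, hfstar_coe] with ω h1 h2
      rw [h2]
      exact h1.1 n
    refine ⟨fstar, hfstarS, ?_⟩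
    intro z hz
    by_cases hcase : ∃ n, z ≤ F0 n
    · obtain ⟨n, hn⟩ := hcase
      exact hn.trans (hFle n)
    · push_neg at hcase
      have hzge : ∀ n, F0 n ≤ z := by
        intro n
        rcases eq_or_ne z (F0 n) with he | hne
        · exact he.ge
        · rcases hK hz (hFK n) hne with h1 | h1
          · exact absurd h1 (hcase n)
          · exact h1
      have hfz : fstar ≤ z := by
        rw [← AEEqFun.coeFn_le]
        have hzn : ∀ᵐ ω ∂P, ∀ n, (F0 n : Ω → ℝ) ω ≤ (z : Ω → ℝ) ω :=
          ae_all_iff.2 fun n => AEEqFun.coeFn_le.2 (hzge n)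
        filter_upwards [hptwise, hfstar_coe, hzn] with ω h1 h2 h3
        rw [h2]
        exact le_of_tendsto h1.2 (Eventually.of_forall fun n => h3 n)
      have h1 : phi P z ≤ s := le_csSup hKbdd (mem_image_of_mem _ hz)
      have h2 : s ≤ phi P fstar := by
        by_contra hlt
        push_neg at hlt
        obtain ⟨n, hn⟩ : ∃ n : ℕ, 1 / ((n : ℝ) + 1) < s - phi P fstar :=
          exists_nat_one_div_lt (by linarith)
        have h4 : phi P (F0 n) ≤ phi P fstar := phi_mono (hFle n)
        have h5 := hFphi n
        linarith
      have h3 : phi P fstar ≤ phi P z := phi_mono hfz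
      exact (phi_strict hfz (le_antisymm h3 (h1.trans h2))).ge
  obtain ⟨x, hxC⟩ := hCne
  obtain ⟨m, hxm, hm⟩ := zorn_le_nonempty₀ S key x (hCS hxC)
  have hmmax : m ∈ maxSet P S := ⟨hm.1, fun g hg hle => le_antisymm hle (hm.2 hg hle)⟩
  have hmC : m ∈ C := hmaxcl hmmax
  exact ⟨m, hmC, fun g hgC hle => hmmax.2 g (hCS hgC) hle⟩
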